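/- arXiv:math/0007004 — 2 statements merged into one kernel-verified Lean document; each statement's English description precedes it below -/
import Mathlib

section
/- Let F be a nonzero homogeneous polynomial of degree n in three variables X₀, X₁, X₂ over ℂ. For j = 0, 1, 2 let mⱼ be the multiplicity of the plane curve {F = 0} at the j-th coordinate point, namely mⱼ is the minimum, over all exponent vectors d in the support of F, of the sum of the exponents of the two variables other than Xⱼ. Let F' be the polynomial obtained from F by the quadratic substitution X₀ ↦ X₁X₂, X₁ ↦ X₀X₂, X₂ ↦ X₀X₁. Then the monomial X₀^{m₀} X₁^{m₁} X₂^{m₂} divides F'; that is, F' = X₀^{m₀} X₁^{m₁} X₂^{m₂} · G for some polynomial G ∈ ℂ[X₀, X₁, X₂]. -/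
open MvPolynomial

/-- Let `F` be a nonzero homogeneous polynomial of degree `n` in `X₀, X₁, X₂`, let `mⱼ` be the
multiplicity of `{F = 0}` at the `j`-th coordinate point (the minimum over exponent vectors `d`
in the support of `F` of the sum of the exponents of the two variables other than `Xⱼ`), and let
`F'` be the image of `F` under the quadratic substitution `X₀ ↦ X₁X₂, X₁ ↦ X₀X₂, X₂ ↦ X₀X₁`.
Then `X₀^{m₀} X₁^{m₁} X₂^{m₂}` divides `F'`. -/
theorem monomial_divides_quadratic_subst (F : MvPolynomial (Fin 3) ℂ) (n : ℕ)
    (hF : F.IsHomogeneous n) (hF0 : F ≠ 0) (m : Fin 3 → ℕ)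
    (hm : ∀ j, m j = F.support.inf' (MvPolynomial.support_nonempty.mpr hF0)
      (fun d => ∑ i ∈ Finset.univ.erase j, d i)) :
    (X 0 ^ m 0 * X 1 ^ m 1 * X 2 ^ m 2 : MvPolynomial (Fin 3) ℂ) ∣
      MvPolynomial.bind₁
        (![X 1 * X 2, X 0 * X 2, X 0 * X 1] : Fin 3 → MvPolynomial (Fin 3) ℂ) F := by
  have key : ∀ d ∈ F.support,
      (X 0 ^ m 0 * X 1 ^ m 1 * X 2 ^ m 2 : MvPolynomial (Fin 3) ℂ) ∣
        MvPolynomial.bind₁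
          (![X 1 * X 2, X 0 * X 2, X 0 * X 1] : Fin 3 → MvPolynomial (Fin 3) ℂ)
          (monomial d (coeff d F)) := by
    intro d hd
    rw [bind₁_monomial]
    apply Dvd.dvd.mul_left
    have hprod : (∏ i ∈ d.support,
        (![X 1 * X 2, X 0 * X 2, X 0 * X 1] : Fin 3 → MvPolynomial (Fin 3) ℂ) i ^ d i)
        = X 0 ^ (d 1 + d 2) * X 1 ^ (d 0 + d 2) * X 2 ^ (d 0 + d 1) := by
      rw [Finset.prod_subset (Finset.subset_univ d.support)
        (by intro i _ hi; simp [Finsupp.notMem_support_iff.mp hi])]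
      rw [Fin.prod_univ_three]
      simp only [Matrix.cons_val_zero, Matrix.cons_val_one, Matrix.head_cons,
        Matrix.cons_val_two, Matrix.tail_cons, mul_pow, pow_add]
      ring
    rw [hprod]
    have hle : ∀ j : Fin 3, m j ≤ ∑ i ∈ Finset.univ.erase j, d i := by
      intro j
      rw [hm j]
      exact Finset.inf'_le _ hd
    have h0 : m 0 ≤ d 1 + d 2 := by
      have := hle 0
      have e : (Finset.univ.erase (0 : Fin 3)) = {1, 2} := by decide
      rw [e, Finset.sum_insert (by decide), Finset.sum_singleton] at this
      exact this
    have h1 : m 1 ≤ d 0 + d 2 := by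
      have := hle 1
      have e : (Finset.univ.erase (1 : Fin 3)) = {0, 2} := by decide
      rw [e, Finset.sum_insert (by decide), Finset.sum_singleton] at this
      exact this
    have h2 : m 2 ≤ d 0 + d 1 := by
      have := hle 2
      have e : (Finset.univ.erase (2 : Fin 3)) = {0, 1} := by decide
      rw [e, Finset.sum_insert (by decide), Finset.sum_singleton] at this
      exact this
    exact mul_dvd_mul (mul_dvd_mul (pow_dvd_pow _ h0) (pow_dvd_pow _ h1)) (pow_dvd_pow _ h2)
  conv_rhs => rw [F.as_sum]
  rw [map_sum]
  exact Finset.dvd_sum key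
end

section
/- Let F be a nonzero homogeneous polynomial of degree n in X₀, X₁, X₂ over ℂ, let mⱼ (j = 0, 1, 2) be the multiplicity of {F = 0} at the j-th coordinate point, let F' be the image of F under the quadratic substitution X₀ ↦ X₁X₂, X₁ ↦ X₀X₂, X₂ ↦ X₀X₁, and write F' = X₀^{m₀} X₁^{m₁} X₂^{m₂} · G. Then G is a nonzero homogeneous polynomial of degree 2n − (m₀ + m₁ + m₂); in particular, if m₀ + m₁ + m₂ > n, then the degree of G is strictly less than n (untwisting by the quadratic Cremona transformation strictly decreases the degree). -/
open MvPolynomial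


private lemma deg3 (d : Fin 3 →₀ ℕ) : d.degree = d 0 + d 1 + d 2 := by
  rw [Finsupp.degree_apply, Finset.sum_subset (Finset.subset_univ d.support)
    (by intro i _ hi; exact Finsupp.notMem_support_iff.mp hi), Fin.sum_univ_three]

/-- auxiliary: explicit finsupp on `Fin 3` -/
private noncomputable def mk3 (a b c : ℕ) : Fin 3 →₀ ℕ :=
  Finsupp.single 0 a + Finsupp.single 1 b + Finsupp.single 2 c

private lemma mk3_0 (a b c : ℕ) : mk3 a b c 0 = a := by simp [mk3, Finsupp.single_apply]
private lemma mk3_1 (a b c : ℕ) : mk3 a b c 1 = b := by simp [mk3, Finsupp.single_apply]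
private lemma mk3_2 (a b c : ℕ) : mk3 a b c 2 = c := by simp [mk3, Finsupp.single_apply]

private lemma decomp3 (d : Fin 3 →₀ ℕ) (c : ℂ) :
    monomial d c = C c * X 0 ^ d 0 * X 1 ^ d 1 * X 2 ^ d 2 := by
  have hd : d = Finsupp.single 0 (d 0) + Finsupp.single 1 (d 1) + Finsupp.single 2 (d 2) := by
    ext j; fin_cases j <;> simp [Finsupp.single_apply]
  conv_lhs => rw [hd]
  rw [monomial_add_single, monomial_add_single, C_mul_X_pow_eq_monomial]

private lemma bind3 (d : Fin 3 →₀ ℕ) (c : ℂ) :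
    bind₁ (![X 1 * X 2, X 0 * X 2, X 0 * X 1] : Fin 3 → MvPolynomial (Fin 3) ℂ) (monomial d c)
      = monomial (mk3 (d 1 + d 2) (d 0 + d 2) (d 0 + d 1)) c := by
  rw [decomp3, decomp3, mk3_0, mk3_1, mk3_2]
  rw [map_mul, map_mul, map_mul, map_pow, map_pow, map_pow, algHom_C,
    bind₁_X_right, bind₁_X_right, bind₁_X_right]
  simp only [Matrix.cons_val_zero, Matrix.cons_val_one, Matrix.head_cons, Matrix.cons_val_two,
    Matrix.tail_cons]
  rw [MvPolynomial.algebraMap_eq]; ring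

/-- With `F` nonzero homogeneous of degree `n`, `mⱼ` the multiplicity of `{F = 0}` at the `j`-th
coordinate point, `F'` the image of `F` under the quadratic substitution, and
`F' = X₀^{m₀} X₁^{m₁} X₂^{m₂} · G`, the polynomial `G` is nonzero homogeneous of degree
`2n − (m₀ + m₁ + m₂)`; in particular, if `m₀ + m₁ + m₂ > n`, then `deg G < n`. -/
theorem quadratic_untwisting_decreases_degree (F : MvPolynomial (Fin 3) ℂ) (n : ℕ)
    (hF : F.IsHomogeneous n) (hF0 : F ≠ 0) (m : Fin 3 → ℕ)
    (hm : ∀ j, m j = F.support.inf' (MvPolynomial.support_nonempty.mpr hF0)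
      (fun d => ∑ i ∈ Finset.univ.erase j, d i))
    (G : MvPolynomial (Fin 3) ℂ)
    (hG : MvPolynomial.bind₁
        (![X 1 * X 2, X 0 * X 2, X 0 * X 1] : Fin 3 → MvPolynomial (Fin 3) ℂ) F =
      X 0 ^ m 0 * X 1 ^ m 1 * X 2 ^ m 2 * G) :
    G ≠ 0 ∧ G.IsHomogeneous (2 * n - (m 0 + m 1 + m 2)) ∧
      (n < m 0 + m 1 + m 2 → 2 * n - (m 0 + m 1 + m 2) < n) := by
  classical
  set mQ : Fin 3 →₀ ℕ := mk3 (m 0) (m 1) (m 2) with hmQ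
  set e : (Fin 3 →₀ ℕ) → (Fin 3 →₀ ℕ) := fun d => mk3 (d 1 + d 2) (d 0 + d 2) (d 0 + d 1)
    with hedef
  have hsum : ∀ d ∈ F.support, d 0 + d 1 + d 2 = n := by
    intro d hd
    have h := hF (MvPolynomial.mem_support_iff.mp hd)
    rw [← deg3, Finsupp.degree_eq_weight_one]
    exact h
  have herase : ∀ (j : Fin 3) (d : Fin 3 →₀ ℕ),
      (∑ i ∈ Finset.univ.erase j, d i) + d j = d 0 + d 1 + d 2 := by
    intro j d
    rw [Finset.sum_erase_add _ _ (Finset.mem_univ j), Fin.sum_univ_three]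
  have hmle : ∀ j, ∀ d ∈ F.support, m j ≤ ∑ i ∈ Finset.univ.erase j, d i := by
    intro j d hd; rw [hm j]; exact Finset.inf'_le _ hd
  have hm0 : ∀ d ∈ F.support, m 0 ≤ d 1 + d 2 := by
    intro d hd; have h1 := hmle 0 d hd; have h2 := herase 0 d; simp at h2 ⊢; omega
  have hm1 : ∀ d ∈ F.support, m 1 ≤ d 0 + d 2 := by
    intro d hd; have h1 := hmle 1 d hd; have h2 := herase 1 d; simp at h2 ⊢; omega
  have hm2 : ∀ d ∈ F.support, m 2 ≤ d 0 + d 1 := by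
    intro d hd; have h1 := hmle 2 d hd; have h2 := herase 2 d; simp at h2 ⊢; omega
  have hle : ∀ d ∈ F.support, mQ ≤ e d := by
    intro d hd
    rw [Finsupp.le_def]
    intro j; fin_cases j
    · show mQ 0 ≤ e d 0
      rw [hmQ, hedef]; rw [mk3_0, mk3_0]; exact hm0 d hd
    · show mQ 1 ≤ e d 1
      rw [hmQ, hedef]; rw [mk3_1, mk3_1]; exact hm1 d hd
    · show mQ 2 ≤ e d 2
      rw [hmQ, hedef]; rw [mk3_2, mk3_2]; exact hm2 d hd
  set G' : MvPolynomial (Fin 3) ℂ := ∑ d ∈ F.support, monomial (e d - mQ) (coeff d F) with hG'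
  have key : bind₁ (![X 1 * X 2, X 0 * X 2, X 0 * X 1] : Fin 3 → MvPolynomial (Fin 3) ℂ) F
      = monomial mQ 1 * G' := by
    conv_lhs => rw [F.as_sum]
    rw [map_sum, hG', Finset.mul_sum]
    refine Finset.sum_congr rfl fun d hd => ?_
    rw [bind3, monomial_mul, one_mul, add_tsub_cancel_of_le (hle d hd)]
  have hXm : (X 0 ^ m 0 * X 1 ^ m 1 * X 2 ^ m 2 : MvPolynomial (Fin 3) ℂ) = monomial mQ 1 := by
    rw [decomp3 mQ 1, hmQ, mk3_0, mk3_1, mk3_2, C_1, one_mul]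
  have hmono_ne : (monomial mQ (1 : ℂ)) ≠ 0 := by
    rw [Ne, monomial_eq_zero]; exact one_ne_zero
  have hGG' : G = G' := by
    apply mul_left_cancel₀ hmono_ne
    rw [← key, hG, hXm]
  obtain ⟨d₀, hd₀⟩ := MvPolynomial.support_nonempty.mpr hF0
  have hinj : ∀ d ∈ F.support, ∀ d' ∈ F.support, e d - mQ = e d' - mQ → d = d' := by
    intro d hd d' hd' hdd
    have h : e d = e d' := by
      rw [← tsub_add_cancel_of_le (hle d hd), ← tsub_add_cancel_of_le (hle d' hd'), hdd]
    have E0 : d 1 + d 2 = d' 1 + d' 2 := by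
      have := DFunLike.congr_fun h 0; rw [hedef] at this
      simpa only [mk3_0] using this
    have E1 : d 0 + d 2 = d' 0 + d' 2 := by
      have := DFunLike.congr_fun h 1; rw [hedef] at this
      simpa only [mk3_1] using this
    have E2 : d 0 + d 1 = d' 0 + d' 1 := by
      have := DFunLike.congr_fun h 2; rw [hedef] at this
      simpa only [mk3_2] using this
    have hs := hsum d hd; have hs' := hsum d' hd'
    ext j; fin_cases j
    · show d 0 = d' 0; omega
    · show d 1 = d' 1; omega
    · show d 2 = d' 2; omega
  have hcoeff : coeff (e d₀ - mQ) G' = coeff d₀ F := by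
    rw [hG', MvPolynomial.coeff_sum]
    rw [Finset.sum_eq_single_of_mem d₀ hd₀
      (fun d hd hne => by
        rw [coeff_monomial, if_neg (fun hcon => hne (hinj d hd d₀ hd₀ hcon))])]
    rw [coeff_monomial, if_pos rfl]
  have hG'0 : G' ≠ 0 := by
    intro h
    exact (MvPolynomial.mem_support_iff.mp hd₀) (by rw [← hcoeff, h, coeff_zero])
  have hhom : G'.IsHomogeneous (2 * n - (m 0 + m 1 + m 2)) := by
    rw [hG']
    apply MvPolynomial.IsHomogeneous.sum
    intro d hd
    apply isHomogeneous_monomial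
    rw [deg3]
    have t0 : (e d - mQ) 0 = d 1 + d 2 - m 0 := by
      rw [Finsupp.tsub_apply, hedef, hmQ, mk3_0, mk3_0]
    have t1 : (e d - mQ) 1 = d 0 + d 2 - m 1 := by
      rw [Finsupp.tsub_apply, hedef, hmQ, mk3_1, mk3_1]
    have t2 : (e d - mQ) 2 = d 0 + d 1 - m 2 := by
      rw [Finsupp.tsub_apply, hedef, hmQ, mk3_2, mk3_2]
    rw [t0, t1, t2]
    have h1 := hsum d hd; have h2 := hm0 d hd; have h3 := hm1 d hd; have h4 := hm2 d hd
    omega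
  have hbound : m 0 + m 1 + m 2 ≤ 2 * n := by
    have h1 := hsum d₀ hd₀; have h2 := hm0 d₀ hd₀
    have h3 := hm1 d₀ hd₀; have h4 := hm2 d₀ hd₀
    omega
  exact ⟨by rw [hGG']; exact hG'0, by rw [hGG']; exact hhom, fun h => by omega⟩
end
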